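/- Let A be a complex unital Banach algebra, let a ∈ A, let p, q ∈ A be idempotents, and suppose b ∈ A satisfies a·b·a = a, b·a·b = b, b·a = p and 1 − a·b = q (i.e., b = a^{(1,2)}_{p,q}). Set κ = ‖a‖·‖b‖. Let p′ ∈ A be an idempotent with ‖p − p′‖ < 1/(1 + κ)² and a·p′ = a. Then there exists b′ ∈ A with a·b′·a = a, b′·a·b′ = b′, b′·a = p′ and 1 − a·b′ = q (i.e., a^{(1,2)}_{p′,q} exists), and it satisfies ‖b′ − b‖ ≤ (1 + κ)·‖p′ − p‖·‖b‖ / (1 − (1 + κ)·‖p′ − p‖) and ‖b′‖ ≤ ‖b‖ / (1 − (1 + κ)·‖p′ − p‖). -/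

import Mathlib

/-- Right range `R_r(a) = {a·x : x ∈ A}`. -/
def Rr {A : Type*} [Ring A] (a : A) : Set A := {y | ∃ x, y = a * x}

/-- Right kernel `K_r(a) = {x ∈ A : a·x = 0}`. -/
def Kr {A : Type*} [Ring A] (a : A) : Set A := {x | a * x = 0}

/-- Left range `R_l(a) = {x·a : x ∈ A}`. -/
def Rl {A : Type*} [Ring A] (a : A) : Set A := {y | ∃ x, y = x * a}

/-- Left kernel `K_l(a) = {x ∈ A : x·a = 0}`. -/
def Kl {A : Type*} [Ring A] (a : A) : Set A := {x | x * a = 0}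
theorem stmt19 {A : Type*} [NormedRing A] [NormedAlgebra ℂ A] [CompleteSpace A]
    (a p q b p' : A) (hp : p * p = p) (hq : q * q = q) (hp' : p' * p' = p')
    (hb0 : a * b * a = a) (hb1 : b * a * b = b) (hb2 : b * a = p) (hb3 : 1 - a * b = q)
    (hpp' : ‖p - p'‖ < 1 / (1 + ‖a‖ * ‖b‖) ^ 2) (hap' : a * p' = a) :
    ∃ b' : A, a * b' * a = a ∧ b' * a * b' = b' ∧ b' * a = p' ∧ 1 - a * b' = q ∧
      ‖b' - b‖ ≤ (1 + ‖a‖ * ‖b‖) * ‖p' - p‖ * ‖b‖ / (1 - (1 + ‖a‖ * ‖b‖) * ‖p' - p‖) ∧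
      ‖b'‖ ≤ ‖b‖ / (1 - (1 + ‖a‖ * ‖b‖) * ‖p' - p‖) := by
  have hκ : (0:ℝ) ≤ ‖a‖ * ‖b‖ := mul_nonneg (norm_nonneg a) (norm_nonneg b)
  have hap : a * p = a := by rw [← hb2, ← mul_assoc]; exact hb0
  have hpb : p * b = b := by rw [← hb2]; exact hb1
  set κ : ℝ := ‖a‖ * ‖b‖ with hκdef
  have ht1 : ‖p - p'‖ < 1 := by
    refine lt_of_lt_of_le hpp' ?_
    rw [div_le_one (by positivity)]
    nlinarith
  -- show p' * p = p'
  have haz : a * (p' - p' * p) = 0 := by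
    rw [mul_sub, ← mul_assoc, hap', hap, sub_self]
  have hpz : p * (p' - p' * p) = 0 := by
    have h : b * a * (p' - p' * p) = b * (a * (p' - p' * p)) := mul_assoc _ _ _
    rw [hb2, haz, mul_zero] at h
    exact h
  have hp'z : p' * (p' - p' * p) = p' - p' * p := by
    rw [mul_sub, hp', ← mul_assoc, hp']
  have hzz : p' - p' * p = (p' - p) * (p' - p' * p) := by
    rw [sub_mul, hp'z, hpz, sub_zero]
  have hz0 : p' - p' * p = 0 := by
    by_contra h
    have hn : (0:ℝ) < ‖p' - p' * p‖ := norm_pos_iff.mpr h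
    have : ‖p' - p' * p‖ ≤ ‖p' - p‖ * ‖p' - p' * p‖ := by
      calc ‖p' - p' * p‖ = ‖(p' - p) * (p' - p' * p)‖ := by rw [← hzz]
        _ ≤ ‖p' - p‖ * ‖p' - p' * p‖ := norm_mul_le _ _
    rw [norm_sub_rev p' p] at this
    nlinarith
  have hp'p : p' * p = p' := by
    have := sub_eq_zero.mp hz0; exact this.symm
  -- denominator positivity
  have hD : (0:ℝ) < 1 - (1 + κ) * ‖p' - p‖ := by
    have h2 : ‖p' - p‖ < 1 / (1 + κ) ^ 2 := by rwa [norm_sub_rev]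
    have h3 : (1 + κ) * ‖p' - p‖ < (1 + κ) * (1 / (1 + κ) ^ 2) := by
      apply mul_lt_mul_of_pos_left h2 (by linarith)
    have h4 : (1 + κ) * (1 / (1 + κ) ^ 2) ≤ 1 := by
      rw [mul_one_div, div_le_one (by positivity)]
      nlinarith
    linarith
  refine ⟨p' * b, ?_, ?_, ?_, ?_, ?_, ?_⟩
  · rw [← mul_assoc, hap', hb0]
  · rw [mul_assoc p' b a, hb2, hp'p, ← mul_assoc, hp']
  · rw [mul_assoc, hb2, hp'p]
  · rw [← mul_assoc, hap', hb3]
  · have hdiff : p' * b - b = (p' - p) * b := by rw [sub_mul, hpb]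
    have h1 : ‖p' * b - b‖ ≤ ‖p' - p‖ * ‖b‖ := by
      rw [hdiff]; exact norm_mul_le _ _
    rw [le_div_iff₀ hD]
    have hbn : (0:ℝ) ≤ ‖b‖ := norm_nonneg b
    have hpn : (0:ℝ) ≤ ‖p' - p‖ := norm_nonneg _
    nlinarith [mul_le_mul_of_nonneg_right h1 hD.le, mul_nonneg hκ (mul_nonneg hpn hbn),
      mul_nonneg (mul_nonneg hpn hpn) hbn, mul_nonneg hκ (mul_nonneg (mul_nonneg hpn hpn) hbn)]
  · have hdiff : p' * b - b = (p' - p) * b := by rw [sub_mul, hpb]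
    have h1 : ‖p' * b‖ ≤ ‖b‖ + ‖p' - p‖ * ‖b‖ := by
      have hab : b + (p' * b - b) = p' * b := by abel
      calc ‖p' * b‖ = ‖b + (p' * b - b)‖ := by rw [hab]
        _ ≤ ‖b‖ + ‖p' * b - b‖ := norm_add_le _ _
        _ ≤ ‖b‖ + ‖p' - p‖ * ‖b‖ := by
            rw [hdiff]; exact add_le_add (le_refl _) (norm_mul_le _ _)
    rw [le_div_iff₀ hD]
    have hbn : (0:ℝ) ≤ ‖b‖ := norm_nonneg b
    have hpn : (0:ℝ) ≤ ‖p' - p‖ := norm_nonneg _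
    nlinarith [mul_le_mul_of_nonneg_right h1 hD.le, mul_nonneg hκ (mul_nonneg hpn hbn),
      mul_nonneg (mul_nonneg hpn hpn) hbn, mul_nonneg hκ (mul_nonneg (mul_nonneg hpn hpn) hbn)]
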